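/- The discrete wave equation (β−α)(f₁₂ − f) + (β+α)(f₁ − f₂) = 0 is 3D consistent: let α, β, γ be real parameters with α ≠ β, α ≠ γ, β ≠ γ, and let f, f₁, f₂, f₃ ∈ ℝ be arbitrary. Define f₁₂ = f − ((β+α)/(β−α))(f₁ − f₂), f₁₃ = f − ((γ+α)/(γ−α))(f₁ − f₃), f₂₃ = f − ((γ+β)/(γ−β))(f₂ − f₃) (the unique solutions of the equation on the three faces of a cube adjacent to f, with parameters (α,β), (α,γ), (β,γ) respectively). Then the three values of f₁₂₃ obtained by solving the equation on the three remaining faces, namely f₁₂₃ = f₃ − ((β+α)/(β−α))(f₁₃ − f₂₃), f₁₂₃ = f₂ − ((γ+α)/(γ−α))(f₁₂ − f₂₃), and f₁₂₃ = f₁ − ((γ+β)/(γ−β))(f₁₂ − f₁₃), all coincide. -/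
import Mathlib


/-- 3D consistency of the discrete wave equation
`(β−α)(f₁₂ − f) + (β+α)(f₁ − f₂) = 0`. -/
theorem discrete_wave_3D_consistent
    (α β γ : ℝ) (hαβ : α ≠ β) (hαγ : α ≠ γ) (hβγ : β ≠ γ)
    (f f₁ f₂ f₃ : ℝ)
    (f₁₂ f₁₃ f₂₃ : ℝ)
    (h₁₂ : f₁₂ = f - ((β + α) / (β - α)) * (f₁ - f₂))
    (h₁₃ : f₁₃ = f - ((γ + α) / (γ - α)) * (f₁ - f₃))
    (h₂₃ : f₂₃ = f - ((γ + β) / (γ - β)) * (f₂ - f₃)) :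
    f₃ - ((β + α) / (β - α)) * (f₁₃ - f₂₃) =
      f₂ - ((γ + α) / (γ - α)) * (f₁₂ - f₂₃) ∧
    f₂ - ((γ + α) / (γ - α)) * (f₁₂ - f₂₃) =
      f₁ - ((γ + β) / (γ - β)) * (f₁₂ - f₁₃) := by
  have hba : β - α ≠ 0 := sub_ne_zero.mpr (Ne.symm hαβ)
  have hga : γ - α ≠ 0 := sub_ne_zero.mpr (Ne.symm hαγ)
  have hgb : γ - β ≠ 0 := sub_ne_zero.mpr (Ne.symm hβγ)
  subst h₁₂ h₁₃ h₂₃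
  constructor <;> · field_simp; ring
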